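/- In the twisted group algebra A(S_n) = R_n ⋊ ℂ[S_n], for any g₁, g₂ ∈ S_n one has g₁* · g₂* = X(g₁,g₂) · (g₁g₂)*, where X(g₁,g₂) = ∏_{(a,b) ∈ I(g₁⁻¹) \ I((g₁g₂)⁻¹)} X_{ab}·X_{ba}. -/

import Mathlib

open MvPolynomial

/-- The polynomial ring `R_n = ℂ[X_{ab} : 1 ≤ a,b ≤ n]` in `n²` commuting variables. -/
abbrev R (n : ℕ) : Type := MvPolynomial (Fin n × Fin n) ℂ

/-- The action of `S_n` on `R_n`: `g.X_{ab} = X_{g(a) g(b)}`. -/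
noncomputable def permAct {n : ℕ} (g : Equiv.Perm (Fin n)) (p : R n) : R n :=
  MvPolynomial.rename (fun ab => (g ab.1, g ab.2)) p

/-- The twisted group algebra `A(S_n) = R_n ⋊ ℂ[S_n]`, as formal `R_n`-linear
combinations of permutations. -/
abbrev A (n : ℕ) : Type := Equiv.Perm (Fin n) →₀ R n

/-- The identity element `id = 1·id` of `A(S_n)`. -/
noncomputable instance {n : ℕ} : One (A n) := ⟨Finsupp.single 1 1⟩

/-- The twisted multiplication `(p₁ g₁)·(p₂ g₂) = (p₁ · (g₁.p₂)) g₁g₂` on `A(S_n)`. -/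
noncomputable instance {n : ℕ} : Mul (A n) :=
  ⟨fun x y => x.sum fun g₁ p₁ => y.sum fun g₂ p₂ =>
    Finsupp.single (g₁ * g₂) (p₁ * permAct g₁ p₂)⟩

/-- The set of inversions `I(g) = {(a,b) : a < b, g(a) > g(b)}`. -/
def inversions {n : ℕ} (g : Equiv.Perm (Fin n)) : Finset (Fin n × Fin n) :=
  Finset.univ.filter fun ab => ab.1 < ab.2 ∧ g ab.2 < g ab.1

/-- The monomial `X_g = ∏_{(a,b) ∈ I(g⁻¹)} X_{ab}`. -/
noncomputable def Xg {n : ℕ} (g : Equiv.Perm (Fin n)) : R n :=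
  ∏ ab ∈ inversions g⁻¹, MvPolynomial.X ab

/-- The element `g* = X_g · g ∈ A(S_n)`. -/
noncomputable def gstar {n : ℕ} (g : Equiv.Perm (Fin n)) : A n :=
  Finsupp.single g (Xg g)

/-- The cycle `t_{k,j}` sending `m ↦ m+1` for `j ≤ m ≤ k-1` and `k ↦ j`,
fixing all points outside `[j,k]` (meaningful for `j ≤ k`). -/
def cyc {n : ℕ} [NeZero n] (k j : Fin n) : Equiv.Perm (Fin n) :=
  Equiv.permCongr (Equiv.addLeft j) (Fin.cycleRange (k - j))

/-- Key combinatorial lemma: the image of `I(g₂⁻¹)` under `(a,b) ↦ (g₁ a, g₁ b)`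
decomposes as a disjoint union. -/
lemma inversions_image_decomp {n : ℕ} (g₁ g₂ : Equiv.Perm (Fin n)) :
    (inversions g₂⁻¹).image (fun ab => (g₁ ab.1, g₁ ab.2)) =
      (inversions (g₁*g₂)⁻¹ \ inversions g₁⁻¹) ∪
        (inversions g₁⁻¹ \ inversions (g₁*g₂)⁻¹).image Prod.swap := by
  ext ⟨x, y⟩
  simp only [inversions, Finset.mem_image, Finset.mem_union, Finset.mem_sdiff,
    Finset.mem_filter, Finset.mem_univ, true_and, Prod.exists, Prod.mk.injEq,
    Prod.swap_prod_mk, mul_inv_rev, Equiv.Perm.mul_apply]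
  constructor
  · rintro ⟨a, b, ⟨hab, hg⟩, rfl, rfl⟩
    rcases lt_trichotomy (g₁ a) (g₁ b) with h | h | h
    · refine Or.inl ⟨⟨h, by simpa using hg⟩, fun ⟨_, h2⟩ => ?_⟩
      rw [(fun x => Equiv.Perm.inv_eq_iff_eq.mpr rfl : ∀ x, g₁⁻¹ (g₁ x) = x), (fun x => Equiv.Perm.inv_eq_iff_eq.mpr rfl : ∀ x, g₁⁻¹ (g₁ x) = x)] at h2
      exact absurd h2 (not_lt.2 hab.le)
    · exact absurd (g₁.injective h) hab.ne
    · refine Or.inr ⟨g₁ b, g₁ a, ⟨⟨h, by simpa using hab⟩, fun ⟨_, h2⟩ => ?_⟩, rfl, rfl⟩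
      rw [(fun x => Equiv.Perm.inv_eq_iff_eq.mpr rfl : ∀ x, g₁⁻¹ (g₁ x) = x), (fun x => Equiv.Perm.inv_eq_iff_eq.mpr rfl : ∀ x, g₁⁻¹ (g₁ x) = x)] at h2
      exact absurd h2 (not_lt.2 hg.le)
  · rintro (⟨⟨hxy, h2⟩, h3⟩ | ⟨a, b, ⟨⟨hab, h2⟩, h3⟩, rfl, rfl⟩)
    · refine ⟨g₁⁻¹ x, g₁⁻¹ y, ⟨?_, h2⟩, by simp, by simp⟩
      rcases lt_trichotomy (g₁⁻¹ x) (g₁⁻¹ y) with h | h | h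
      · exact h
      · exact absurd (g₁⁻¹.injective h) hxy.ne
      · exact absurd ⟨hxy, h⟩ h3
    · refine ⟨g₁⁻¹ b, g₁⁻¹ a, ⟨h2, ?_⟩, by simp, by simp⟩
      rcases lt_trichotomy (g₂⁻¹ (g₁⁻¹ a)) (g₂⁻¹ (g₁⁻¹ b)) with h | h | h
      · exact h
      · exact absurd (g₁⁻¹.injective (g₂⁻¹.injective h)) hab.ne
      · exact absurd ⟨hab, h⟩ h3

/-- The polynomial identity underlying `gstar_mul`. -/
lemma Xg_mul_permAct {n : ℕ} (g₁ g₂ : Equiv.Perm (Fin n)) :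
    Xg g₁ * permAct g₁ (Xg g₂) =
      (∏ ab ∈ inversions g₁⁻¹ \ inversions (g₁ * g₂)⁻¹,
          (MvPolynomial.X ab * MvPolynomial.X ab.swap : R n)) * Xg (g₁ * g₂) := by
  set S := inversions g₁⁻¹ with hS
  set H := inversions (g₁ * g₂)⁻¹ with hH
  have h1 : permAct g₁ (Xg g₂) =
      ∏ ab ∈ (inversions g₂⁻¹).image (fun ab => (g₁ ab.1, g₁ ab.2)), (X ab : R n) := by
    rw [permAct, Xg, map_prod, Finset.prod_image]
    · simp [rename_X]
    · intro a _ b _ h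
      simp only [Prod.mk.injEq] at h
      exact Prod.ext (g₁.injective h.1) (g₁.injective h.2)
  have hdisj : Disjoint (H \ S) ((S \ H).image Prod.swap) := by
    rw [Finset.disjoint_left]
    rintro ⟨x, y⟩ hx hy
    simp only [Finset.mem_sdiff, Finset.mem_image, Prod.exists, hS, hH, inversions,
      Finset.mem_filter, Finset.mem_univ, true_and, Prod.swap_prod_mk,
      Prod.mk.injEq] at hx hy
    obtain ⟨a, b, ⟨⟨hab, -⟩, -⟩, rfl, rfl⟩ := hy
    exact absurd hx.1.1 (not_lt.2 hab.le)
  have hswap : ∏ ab ∈ (S \ H).image Prod.swap, (X ab : R n)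
      = ∏ ab ∈ S \ H, (X ab.swap : R n) := by
    rw [Finset.prod_image]
    intro a _ b _ h
    exact Prod.swap_injective h
  rw [h1, inversions_image_decomp, Finset.prod_union hdisj, hswap, Xg, Xg,
    Finset.prod_mul_distrib, mul_inv_rev]
  have e1 : (∏ ab ∈ S, (X ab : R n)) * ∏ ab ∈ H \ S, (X ab : R n)
       = ∏ ab ∈ S ∪ H, (X ab : R n) := by
    rw [← Finset.prod_union Finset.disjoint_sdiff, Finset.union_sdiff_self_eq_union]
  have e2 : (∏ ab ∈ S \ H, (X ab : R n)) * ∏ ab ∈ H, (X ab : R n)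
       = ∏ ab ∈ S ∪ H, (X ab : R n) := by
    rw [← Finset.prod_union Finset.sdiff_disjoint, Finset.sdiff_union_self_eq_union]
  calc (∏ ab ∈ S, (X ab : R n)) * ((∏ ab ∈ H \ S, (X ab : R n)) * ∏ ab ∈ S \ H, (X ab.swap : R n))
      = ((∏ ab ∈ S, (X ab : R n)) * ∏ ab ∈ H \ S, (X ab : R n)) * ∏ ab ∈ S \ H, (X ab.swap : R n) := by ring
    _ = ((∏ ab ∈ S \ H, (X ab : R n)) * ∏ ab ∈ H, (X ab : R n)) * ∏ ab ∈ S \ H, (X ab.swap : R n) := by rw [e1, ← e2]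
    _ = (∏ ab ∈ S \ H, (X ab : R n)) * (∏ ab ∈ S \ H, (X ab.swap : R n)) * ∏ ab ∈ H, (X ab : R n) := by ring

/-- `g₁* · g₂* = X(g₁,g₂) · (g₁g₂)*` with
`X(g₁,g₂) = ∏_{(a,b) ∈ I(g₁⁻¹) \ I((g₁g₂)⁻¹)} X_{ab}·X_{ba}`. -/
theorem gstar_mul {n : ℕ} (g₁ g₂ : Equiv.Perm (Fin n)) :
    gstar g₁ * gstar g₂ =
      (∏ ab ∈ inversions g₁⁻¹ \ inversions (g₁ * g₂)⁻¹,
          (MvPolynomial.X ab * MvPolynomial.X ab.swap : R n)) • gstar (g₁ * g₂) := by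
  have hmul : gstar g₁ * gstar g₂ =
      Finsupp.single (g₁ * g₂) (Xg g₁ * permAct g₁ (Xg g₂)) := by
    show Finsupp.sum _ _ = _
    rw [gstar, gstar, Finsupp.sum_single_index (by simp),
      Finsupp.sum_single_index (by simp [permAct])]
  rw [hmul, gstar, Finsupp.smul_single, smul_eq_mul, Xg_mul_permAct]
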